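/- For any graphon g, the triangle density satisfies τ(g) ≤ ε(g)^{3/2}, with equality for the 'clique' graphon equal to 1 on [0,√ε]² and 0 elsewhere (whose edge density is ε and triangle density is ε^{3/2}). -/

import Mathlib

open MeasureTheory Real Set

noncomputable section

def I01 : Set ℝ := Set.Icc 0 1

def IsGraphon (g : ℝ → ℝ → ℝ) : Prop :=
  Measurable (Function.uncurry g) ∧ (∀ x y, g x y = g y x) ∧ ∀ x y, g x y ∈ Set.Icc (0:ℝ) 1

def edgeDensity (g : ℝ → ℝ → ℝ) : ℝ := ∫ x in I01, ∫ y in I01, g x y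

def triDensity (g : ℝ → ℝ → ℝ) : ℝ :=
  ∫ x in I01, ∫ y in I01, ∫ z in I01, g x y * g y z * g z x

/-- The clique graphon: `1` on `[0, √ε]²`, `0` elsewhere. -/
def cliqueGraphon (ε : ℝ) (x y : ℝ) : ℝ :=
  if x ≤ Real.sqrt ε ∧ y ≤ Real.sqrt ε then 1 else 0

-- AUX

lemma KK.integrable_of_bdd {α : Type*} [MeasurableSpace α] {μ : Measure α} [IsFiniteMeasure μ]
    {f : α → ℝ} (hm : AEStronglyMeasurable f μ) {C : ℝ} (hb : ∀ x, ‖f x‖ ≤ C) :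
    Integrable f μ :=
  (integrable_const C).mono' hm (ae_of_all _ hb)

lemma KK.rpow_two' (x : ℝ) : x ^ (2:ℝ) = x ^ 2 := by
  rw [show (2:ℝ) = ((2:ℕ):ℝ) by norm_num, Real.rpow_natCast]

lemma KK.cs_int {α : Type*} [MeasurableSpace α] {μ : Measure α} [IsFiniteMeasure μ]
    {f h : α → ℝ} (hfm : AEStronglyMeasurable f μ) (hhm : AEStronglyMeasurable h μ)
    (hf0 : ∀ x, 0 ≤ f x) (hh0 : ∀ x, 0 ≤ h x) (hf1 : ∀ x, f x ≤ 1) (hh1 : ∀ x, h x ≤ 1) :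
    ∫ a, f a * h a ∂μ ≤ Real.sqrt (∫ a, f a ^ 2 ∂μ) * Real.sqrt (∫ a, h a ^ 2 ∂μ) := by
  have hpq : (2:ℝ).HolderConjugate 2 := Real.holderConjugate_iff.mpr ⟨by norm_num, by norm_num⟩
  have hf2 : MemLp f (ENNReal.ofReal 2) μ :=
    MemLp.of_bound hfm 1 (ae_of_all _ fun x => by
      rw [Real.norm_of_nonneg (hf0 x)]; exact hf1 x)
  have hh2 : MemLp h (ENNReal.ofReal 2) μ :=
    MemLp.of_bound hhm 1 (ae_of_all _ fun x => by
      rw [Real.norm_of_nonneg (hh0 x)]; exact hh1 x)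
  have H := integral_mul_le_Lp_mul_Lq_of_nonneg hpq (ae_of_all _ hf0) (ae_of_all _ hh0) hf2 hh2
  simp_rw [KK.rpow_two'] at H
  rwa [Real.sqrt_eq_rpow, Real.sqrt_eq_rpow]

lemma KK.sqrt_mul_self_eq_rpow {a : ℝ} (ha : 0 ≤ a) :
    Real.sqrt a * a = a ^ ((3:ℝ)/2) := by
  rcases eq_or_lt_of_le ha with h | h
  · rw [← h]; simp [Real.zero_rpow (by norm_num : ((3:ℝ)/2) ≠ 0)]
  · rw [show ((3:ℝ)/2) = (1:ℝ)/2 + 1 by norm_num, Real.rpow_add h, Real.rpow_one,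
      Real.sqrt_eq_rpow]

lemma KK.vol_I01 : (volume : Measure ℝ) I01 = 1 := by
  simp [I01, Real.volume_Icc]

instance : IsFiniteMeasure ((volume : Measure ℝ).restrict I01) :=
  ⟨by rw [Measure.restrict_apply_univ, KK.vol_I01]; exact ENNReal.one_lt_top⟩

lemma KK.main_ineq (g : ℝ → ℝ → ℝ) (hg : IsGraphon g) :
    triDensity g ≤ edgeDensity g ^ ((3:ℝ)/2) := by
  obtain ⟨hm, hsym, hb⟩ := hg
  set μ : Measure ℝ := volume.restrict I01 with hμdef
  have hμ1 : μ Set.univ = 1 := by rw [Measure.restrict_apply_univ, KK.vol_I01]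
  have hnn : ∀ x y, 0 ≤ g x y := fun x y => (hb x y).1
  have hle1 : ∀ x y, g x y ≤ 1 := fun x y => (hb x y).2
  have hmg : Measurable fun p : ℝ × ℝ => g p.1 p.2 := hm
  -- bounded measurable ⇒ integrable on μ
  have intbdd : ∀ {f : ℝ → ℝ}, AEStronglyMeasurable f μ → (∀ x, ‖f x‖ ≤ 1) → Integrable f μ :=
    fun hfm hb' => KK.integrable_of_bdd hfm hb'
  -- Q p = ∫ z, g p.2 z * g z p.1
  set Q : ℝ × ℝ → ℝ := fun p => ∫ z in I01, g p.2 z * g z p.1 with hQdef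
  have hF : Measurable fun q : (ℝ × ℝ) × ℝ => g q.1.2 q.2 * g q.2 q.1.1 := by
    exact (hm.comp ((measurable_snd.comp measurable_fst).prodMk measurable_snd)).mul
      (hm.comp (measurable_snd.prodMk (measurable_fst.comp measurable_fst)))
  have hQsm : StronglyMeasurable Q := hF.stronglyMeasurable.integral_prod_right'
  have hQ0 : ∀ p, 0 ≤ Q p := fun p =>
    integral_nonneg fun z => mul_nonneg (hnn _ _) (hnn _ _)
  have hQ1 : ∀ p, Q p ≤ 1 := by
    intro p
    calc Q p ≤ ‖Q p‖ := le_abs_self _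
    _ ≤ 1 * (μ Set.univ).toReal := by
        refine norm_integral_le_of_norm_le_const (ae_of_all _ fun z => ?_)
        rw [Real.norm_of_nonneg (mul_nonneg (hnn _ _) (hnn _ _))]
        exact mul_le_one₀ (hle1 _ _) (hnn _ _) (hle1 _ _)
    _ = 1 := by rw [hμ1]; simp
  -- s x = ∫ z, g x z ^ 2
  set s : ℝ → ℝ := fun x => ∫ z in I01, g x z ^ 2 with hsdef
  have hs0 : ∀ x, 0 ≤ s x := fun x => integral_nonneg fun z => sq_nonneg _
  have hs1 : ∀ x, s x ≤ 1 := by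
    intro x
    calc s x ≤ ‖s x‖ := le_abs_self _
    _ ≤ 1 * (μ Set.univ).toReal := by
        refine norm_integral_le_of_norm_le_const (ae_of_all _ fun z => ?_)
        rw [Real.norm_of_nonneg (sq_nonneg _)]
        calc g x z ^ 2 = g x z * g x z := pow_two _
        _ ≤ 1 := mul_le_one₀ (hle1 _ _) (hnn _ _) (hle1 _ _)
    _ = 1 := by rw [hμ1]; simp
  have hssm : StronglyMeasurable s :=
    ((hmg.pow_const 2) : Measurable fun p : ℝ × ℝ => g p.1 p.2 ^ 2).stronglyMeasurable.integral_prod_right'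
  -- pointwise Cauchy–Schwarz: Q p ^ 2 ≤ s p.1 * s p.2
  have hQsq : ∀ p : ℝ × ℝ, Q p ^ 2 ≤ s p.1 * s p.2 := by
    rintro ⟨x, y⟩
    have h1 : Q (x, y) ≤ Real.sqrt (s y) * Real.sqrt (s x) := by
      have := KK.cs_int (μ := μ)
        (f := fun z => g y z) (h := fun z => g z x)
        ((hm.comp (measurable_const.prodMk measurable_id)).aestronglyMeasurable)
        ((hm.comp (measurable_id.prodMk measurable_const)).aestronglyMeasurable)
        (fun z => hnn _ _) (fun z => hnn _ _) (fun z => hle1 _ _) (fun z => hle1 _ _)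
      have hsx : (∫ z in I01, g z x ^ 2) = s x := by
        refine integral_congr_ae (ae_of_all _ fun z => ?_)
        show g z x ^ 2 = g x z ^ 2
        rw [hsym z x]
      rw [hsx] at this
      exact this
    calc Q (x, y) ^ 2 ≤ (Real.sqrt (s y) * Real.sqrt (s x)) ^ 2 :=
      pow_le_pow_left₀ (hQ0 _) h1 2
    _ = s y * s x := by
        rw [mul_pow, Real.sq_sqrt (hs0 y), Real.sq_sqrt (hs0 x)]
    _ = s x * s y := mul_comm _ _
  -- integrabilities on the product
  have hmgsm : AEStronglyMeasurable (fun p : ℝ × ℝ => g p.1 p.2) (μ.prod μ) :=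
    hmg.aestronglyMeasurable
  have int_g : Integrable (fun p : ℝ × ℝ => g p.1 p.2) (μ.prod μ) :=
    KK.integrable_of_bdd hmgsm (fun p => by
      rw [Real.norm_of_nonneg (hnn _ _)]; exact hle1 _ _)
  have int_g2 : Integrable (fun p : ℝ × ℝ => g p.1 p.2 ^ 2) (μ.prod μ) :=
    KK.integrable_of_bdd (hmg.pow_const 2).aestronglyMeasurable (fun p => by
      rw [Real.norm_of_nonneg (sq_nonneg _)]
      exact pow_le_one₀ (hnn _ _) (hle1 _ _))
  have int_gQ : Integrable (fun p : ℝ × ℝ => g p.1 p.2 * Q p) (μ.prod μ) :=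
    KK.integrable_of_bdd (hmg.aestronglyMeasurable.mul hQsm.aestronglyMeasurable)
      (fun p => by
        rw [Real.norm_of_nonneg (mul_nonneg (hnn _ _) (hQ0 _))]
        exact mul_le_one₀ (hle1 _ _) (hQ0 _) (hQ1 _))
  have int_Q2 : Integrable (fun p : ℝ × ℝ => Q p ^ 2) (μ.prod μ) :=
    KK.integrable_of_bdd ((hQsm.pow 2)).aestronglyMeasurable (fun p => by
      rw [Real.norm_of_nonneg (sq_nonneg _)]
      exact pow_le_one₀ (hQ0 _) (hQ1 _))
  have int_ss : Integrable (fun p : ℝ × ℝ => s p.1 * s p.2) (μ.prod μ) :=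
    KK.integrable_of_bdd
      ((hssm.comp_measurable measurable_fst).mul (hssm.comp_measurable measurable_snd)).aestronglyMeasurable
      (fun p => by
        rw [Real.norm_of_nonneg (mul_nonneg (hs0 _) (hs0 _))]
        exact mul_le_one₀ (hs1 _) (hs0 _) (hs1 _))
  -- e₂
  set e₂ : ℝ := ∫ p : ℝ × ℝ, g p.1 p.2 ^ 2 ∂(μ.prod μ) with he₂def
  have he₂0 : 0 ≤ e₂ := integral_nonneg fun p => sq_nonneg _
  have he₂le : e₂ ≤ edgeDensity g := by
    have h1 : e₂ ≤ ∫ p : ℝ × ℝ, g p.1 p.2 ∂(μ.prod μ) := by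
      refine integral_mono int_g2 int_g fun p => ?_
      nlinarith [hnn p.1 p.2, hle1 p.1 p.2]
    have h2 : ∫ p : ℝ × ℝ, g p.1 p.2 ∂(μ.prod μ) = edgeDensity g :=
      (integral_integral (f := fun x y => g x y) int_g).symm
    linarith
  -- step 1: rewrite triDensity
  have step1 : triDensity g = ∫ x in I01, ∫ y in I01, g x y * Q (x, y) := by
    unfold triDensity
    simp_rw [mul_assoc, integral_const_mul]
    rfl
  have step2 : (∫ x in I01, ∫ y in I01, g x y * Q (x, y))
      = ∫ p : ℝ × ℝ, g p.1 p.2 * Q p ∂(μ.prod μ) :=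
    integral_integral (f := fun x y => g x y * Q (x, y)) int_gQ
  have step3 : (∫ p : ℝ × ℝ, g p.1 p.2 * Q p ∂(μ.prod μ))
      ≤ Real.sqrt e₂ * Real.sqrt (∫ p : ℝ × ℝ, Q p ^ 2 ∂(μ.prod μ)) :=
    KK.cs_int hmgsm hQsm.aestronglyMeasurable
      (fun p => hnn _ _) hQ0 (fun p => hle1 _ _) hQ1
  have step4 : (∫ p : ℝ × ℝ, Q p ^ 2 ∂(μ.prod μ)) ≤ e₂ ^ 2 := by
    have h1 : (∫ p : ℝ × ℝ, Q p ^ 2 ∂(μ.prod μ)) ≤ ∫ p : ℝ × ℝ, s p.1 * s p.2 ∂(μ.prod μ) :=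
      integral_mono int_Q2 int_ss hQsq
    have h2 : (∫ p : ℝ × ℝ, s p.1 * s p.2 ∂(μ.prod μ)) = (∫ x, s x ∂μ) * ∫ x, s x ∂μ :=
      integral_prod_mul s s
    have h3 : (∫ x, s x ∂μ) = e₂ := by
      rw [he₂def, ← integral_integral (f := fun x y => g x y ^ 2) int_g2]
    rw [h2, h3] at h1
    calc (∫ p : ℝ × ℝ, Q p ^ 2 ∂(μ.prod μ)) ≤ e₂ * e₂ := h1
    _ = e₂ ^ 2 := (sq e₂).symm
  have step5 : Real.sqrt (∫ p : ℝ × ℝ, Q p ^ 2 ∂(μ.prod μ)) ≤ e₂ := by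
    calc Real.sqrt (∫ p : ℝ × ℝ, Q p ^ 2 ∂(μ.prod μ)) ≤ Real.sqrt (e₂ ^ 2) :=
      Real.sqrt_le_sqrt step4
    _ = e₂ := by rw [Real.sqrt_sq he₂0]
  calc triDensity g = ∫ p : ℝ × ℝ, g p.1 p.2 * Q p ∂(μ.prod μ) := by rw [step1, step2]
  _ ≤ Real.sqrt e₂ * Real.sqrt (∫ p : ℝ × ℝ, Q p ^ 2 ∂(μ.prod μ)) := step3
  _ ≤ Real.sqrt e₂ * e₂ := mul_le_mul_of_nonneg_left step5 (Real.sqrt_nonneg _)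
  _ = e₂ ^ ((3:ℝ)/2) := KK.sqrt_mul_self_eq_rpow he₂0
  _ ≤ edgeDensity g ^ ((3:ℝ)/2) := Real.rpow_le_rpow he₂0 he₂le (by norm_num)

theorem kruskal_katona_graphon :
    (∀ g : ℝ → ℝ → ℝ, IsGraphon g → triDensity g ≤ edgeDensity g ^ ((3:ℝ)/2)) ∧
    ∀ ε ∈ Set.Icc (0:ℝ) 1,
      edgeDensity (cliqueGraphon ε) = ε ∧
      triDensity (cliqueGraphon ε) = ε ^ ((3:ℝ)/2) := by
  constructor
  · exact KK.main_ineq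
  · rintro ε ⟨hε0, hε1⟩
    set c := Real.sqrt ε with hc
    have hc0 : 0 ≤ c := Real.sqrt_nonneg _
    have hc1 : c ≤ 1 := by
      rw [hc, show (1:ℝ) = Real.sqrt 1 by rw [Real.sqrt_one]]
      exact Real.sqrt_le_sqrt hε1
    set ind : ℝ → ℝ := fun t => if t ≤ c then 1 else 0 with hinddef
    have key : (∫ t in I01, ind t) = c := by
      have h1 : ind = Set.indicator (Set.Iic c) (fun _ => (1:ℝ)) := by
        funext t
        simp [hinddef, Set.indicator, Set.mem_Iic]
      rw [h1, setIntegral_indicator measurableSet_Iic]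
      rw [show I01 ∩ Set.Iic c = Set.Icc 0 c by
        ext t
        simp only [I01, Set.mem_inter_iff, Set.mem_Icc, Set.mem_Iic]
        exact ⟨fun h => ⟨h.1.1, h.2⟩, fun h => ⟨⟨h.1, h.2.trans hc1⟩, h.2⟩⟩]
      rw [setIntegral_const]
      simp [Real.volume_Icc, hc0]
    have hprod2 : ∀ x y, cliqueGraphon ε x y = ind x * ind y := by
      intro x y
      by_cases hx : x ≤ c <;> by_cases hy : y ≤ c <;>
        simp [cliqueGraphon, hinddef, ← hc, hx, hy]
    have hcsq : c * c = ε := Real.mul_self_sqrt hε0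
    constructor
    · unfold edgeDensity
      simp_rw [hprod2, integral_const_mul, integral_mul_const, key]
      exact hcsq
    · unfold triDensity
      have h3 : ∀ x y z : ℝ, cliqueGraphon ε x y * cliqueGraphon ε y z * cliqueGraphon ε z x
          = ind x * (ind y * ind z) := by
        intro x y z
        by_cases hx : x ≤ c <;> by_cases hy : y ≤ c <;> by_cases hz : z ≤ c <;>
          simp [cliqueGraphon, hinddef, ← hc, hx, hy, hz]
      simp_rw [h3, integral_const_mul, integral_mul_const, key]
      rw [show c * (c * c) = c ^ (3:ℕ) by ring]
      rw [hc, Real.sqrt_eq_rpow, ← Real.rpow_natCast (ε ^ ((1:ℝ)/2)) 3, ← Real.rpow_mul hε0]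
      norm_num
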